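/- The group G35 defined by ⟨a, b, c | a⁴ = b⁴ = 1, [a,b] = 1, c² = a², cac⁻¹ = a⁻¹, cbc⁻¹ = b⁻¹⟩ has order 32 and is not isomorphic to the split extension G34 = (C₄ × C₄) ⋊ C₂ with C₂ acting by inversion. -/

import Mathlib

/-- The homomorphism `C₂ → Aut(N)` sending the nontrivial element of `C₂`
to the inversion automorphism of the abelian group `N`. -/
noncomputable def invAction (N : Type*) [CommGroup N] :
    Multiplicative (ZMod 2) →* MulAut N :=
  AddMonoidHom.toMultiplicativeLeft <|
    ZMod.lift 2 ⟨zmultiplesHom (Additive (MulAut N)) (Additive.ofMul (MulEquiv.inv N)), by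
      have h : (MulEquiv.inv N) * (MulEquiv.inv N) = 1 := by ext x; simp
      simp only [zmultiplesHom_apply]
      norm_num
      rw [two_zsmul, ← ofMul_mul, h, ofMul_one]⟩

/-- The cyclic group of order `n` (multiplicative). -/
abbrev Cyc (n : ℕ) := Multiplicative (ZMod n)

/-- The semidirect product `(C₄ × C₄) ⋊ C₂`, where the nontrivial element of `C₂`
acts by inverting both factors: the group `G34`. -/
noncomputable abbrev G34 : Type := (Cyc 4 × Cyc 4) ⋊[invAction (Cyc 4 × Cyc 4)] Cyc 2

/-- The relations of the presentation
`G35 = ⟨a, b, c | a⁴ = b⁴ = 1, [a,b] = 1, c² = a², cac⁻¹ = a⁻¹, cbc⁻¹ = b⁻¹⟩`,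
with `a, b, c` the generators `FreeGroup.of 0, 1, 2`. -/
def G35rels : Set (FreeGroup (Fin 3)) :=
  { (FreeGroup.of 0) ^ 4, (FreeGroup.of 1) ^ 4,
    FreeGroup.of 0 * FreeGroup.of 1 * (FreeGroup.of 0)⁻¹ * (FreeGroup.of 1)⁻¹,
    (FreeGroup.of 2) ^ 2 * ((FreeGroup.of 0) ^ 2)⁻¹,
    FreeGroup.of 2 * FreeGroup.of 0 * (FreeGroup.of 2)⁻¹ * FreeGroup.of 0,
    FreeGroup.of 2 * FreeGroup.of 1 * (FreeGroup.of 2)⁻¹ * FreeGroup.of 1 }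

/-! ### Auxiliary: a concrete model `Mc` of the group `G35`. -/

/-- The underlying set of the concrete model of `G35`: triples `(i, j, k)` representing
`aⁱ bʲ cᵏ`. -/
def Mc : Type := ZMod 4 × ZMod 4 × ZMod 2

namespace Mc

instance : DecidableEq Mc := by unfold Mc; infer_instance
instance : Fintype Mc := by unfold Mc; infer_instance

def twist (k : ZMod 2) (x : ZMod 4) : ZMod 4 := if k = 1 then -x else x
def extra (k k' : ZMod 2) : ZMod 4 := if k = 1 ∧ k' = 1 then 2 else 0

instance : Mul Mc :=
  ⟨fun m m' => (m.1 + twist m.2.2 m'.1 + extra m.2.2 m'.2.2,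
    m.2.1 + twist m.2.2 m'.2.1, m.2.2 + m'.2.2)⟩
instance : One Mc := ⟨((0 : ZMod 4), (0 : ZMod 4), (0 : ZMod 2))⟩
instance : Inv Mc :=
  ⟨fun m => (twist m.2.2 (-m.1) + extra m.2.2 m.2.2, twist m.2.2 (-m.2.1), m.2.2)⟩

lemma mul_def (m m' : Mc) : m * m' = (m.1 + twist m.2.2 m'.1 + extra m.2.2 m'.2.2,
    m.2.1 + twist m.2.2 m'.2.1, m.2.2 + m'.2.2) := rfl

lemma inv_def (m : Mc) : m⁻¹ = (twist m.2.2 (-m.1) + extra m.2.2 m.2.2,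
    twist m.2.2 (-m.2.1), m.2.2) := rfl

lemma one_def : (1 : Mc) = ((0 : ZMod 4), (0 : ZMod 4), (0 : ZMod 2)) := rfl

lemma two_cases (k : ZMod 2) : k = 0 ∨ k = 1 := by revert k; decide

instance : Group Mc :=
  Group.ofLeftAxioms
    (by
      rintro ⟨i1, j1, k1⟩ ⟨i2, j2, k2⟩ ⟨i3, j3, k3⟩
      rcases two_cases k1 with rfl | rfl <;> rcases two_cases k2 with rfl | rfl <;>
        rcases two_cases k3 with rfl | rfl <;>
      · refine Prod.ext ?_ (Prod.ext ?_ ?_) <;>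
          simp [HMul.hMul, Mul.mul, mul_def, twist, extra, show (-2 : ZMod 4) = 2 from by decide] <;> ring1)
    (by
      rintro ⟨i, j, k⟩
      refine Prod.ext ?_ (Prod.ext ?_ ?_) <;>
        simp [HMul.hMul, Mul.mul, mul_def, one_def, twist, extra])
    (by
      rintro ⟨i, j, k⟩
      rcases two_cases k with rfl | rfl <;>
      · refine Prod.ext ?_ (Prod.ext ?_ ?_) <;>
          simp [HMul.hMul, Mul.mul, Inv.inv, mul_def, inv_def, one_def, twist, extra] <;> first | ring1 | decide)

end Mc

namespace G35aux

abbrev PG := PresentedGroup G35rels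

def a : PG := PresentedGroup.of 0
def b : PG := PresentedGroup.of 1
def c : PG := PresentedGroup.of 2

lemma rel_one {r : FreeGroup (Fin 3)} (hr : r ∈ G35rels) :
    PresentedGroup.mk G35rels r = 1 :=
  (QuotientGroup.eq_one_iff r).mpr (Subgroup.subset_normalClosure hr)

lemma ha4 : a ^ 4 = 1 := by
  have := rel_one (show (FreeGroup.of 0) ^ 4 ∈ G35rels by left; rfl)
  simpa [a, PresentedGroup.of] using this

lemma hb4 : b ^ 4 = 1 := by
  have := rel_one (show (FreeGroup.of 1) ^ 4 ∈ G35rels by right; left; rfl)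
  simpa [b, PresentedGroup.of] using this

lemma hab : a * b = b * a := by
  have := rel_one (show FreeGroup.of 0 * FreeGroup.of 1 * (FreeGroup.of 0)⁻¹ *
      (FreeGroup.of 1)⁻¹ ∈ G35rels by right; right; left; rfl)
  simp only [map_mul, map_inv] at this
  have h : a * b * a⁻¹ * b⁻¹ = 1 := this
  have h1 : a * b * a⁻¹ = b := mul_inv_eq_one.mp h
  exact mul_inv_eq_iff_eq_mul.mp h1

lemma hc2 : c ^ 2 = a ^ 2 := by
  have := rel_one (show (FreeGroup.of 2) ^ 2 * ((FreeGroup.of 0) ^ 2)⁻¹ ∈ G35rels by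
    right; right; right; left; rfl)
  simp only [map_mul, map_inv, map_pow] at this
  have h : c ^ 2 * (a ^ 2)⁻¹ = 1 := this
  exact mul_inv_eq_one.mp h

lemma hca : c * a = a⁻¹ * c := by
  have := rel_one (show FreeGroup.of 2 * FreeGroup.of 0 * (FreeGroup.of 2)⁻¹ *
      FreeGroup.of 0 ∈ G35rels by right; right; right; right; left; rfl)
  simp only [map_mul, map_inv] at this
  have h : c * a * c⁻¹ * a = 1 := this
  have h2 : c * a * c⁻¹ = a⁻¹ := eq_inv_of_mul_eq_one_left h
  exact mul_inv_eq_iff_eq_mul.mp h2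

lemma hcb : c * b = b⁻¹ * c := by
  have := rel_one (show FreeGroup.of 2 * FreeGroup.of 1 * (FreeGroup.of 2)⁻¹ *
      FreeGroup.of 1 ∈ G35rels by right; right; right; right; right; rfl)
  simp only [map_mul, map_inv] at this
  have h : c * b * c⁻¹ * b = 1 := this
  have h2 : c * b * c⁻¹ = b⁻¹ := eq_inv_of_mul_eq_one_left h
  exact mul_inv_eq_iff_eq_mul.mp h2

lemma pow_mod4 {x : PG} (h : x ^ 4 = 1) (m : ℕ) : x ^ m = x ^ (m % 4) := by
  conv_lhs => rw [← Nat.div_add_mod m 4]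
  rw [pow_add, pow_mul, h, one_pow, one_mul]

def A (i : ZMod 4) : PG := a ^ i.val
def B (j : ZMod 4) : PG := b ^ j.val
def C (k : ZMod 2) : PG := c ^ k.val

lemma AA (i i' : ZMod 4) : A i * A i' = A (i + i') := by
  rw [A, A, A, ← pow_add, ZMod.val_add, ← pow_mod4 ha4]

lemma BB (j j' : ZMod 4) : B j * B j' = B (j + j') := by
  rw [B, B, B, ← pow_add, ZMod.val_add, ← pow_mod4 hb4]

lemma A_inv (i : ZMod 4) : (A i)⁻¹ = A (-i) := by
  apply inv_eq_of_mul_eq_one_right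
  rw [AA, add_neg_cancel]
  simp [A]

lemma B_inv (j : ZMod 4) : (B j)⁻¹ = B (-j) := by
  apply inv_eq_of_mul_eq_one_right
  rw [BB, add_neg_cancel]
  simp [B]

lemma BA (j i : ZMod 4) : B j * A i = A i * B j := by
  have hcomm : Commute a b := hab
  exact (Commute.pow_pow hcomm _ _).symm

lemma CA (k : ZMod 2) (i : ZMod 4) : C k * A i = A (Mc.twist k i) * C k := by
  rcases Mc.two_cases k with rfl | rfl
  · simp [C, Mc.twist, show ((0 : ZMod 2).val = 0) from rfl]
  · have key : c * a ^ i.val = (a ^ i.val)⁻¹ * c := by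
      have h := conj_pow (i := i.val) (a := c) (b := a)
      have hc : c * a * c⁻¹ = a⁻¹ := by rw [hca]; group
      rw [hc] at h
      calc c * a ^ i.val = (a⁻¹) ^ i.val * c := by
            rw [h]; group
        _ = (a ^ i.val)⁻¹ * c := by rw [inv_pow]
    simp only [C, Mc.twist, if_pos rfl, if_true,
      show ((1 : ZMod 2).val = 1) from rfl, pow_one]
    rw [← A_inv]
    simp only [A]
    exact key

lemma CB (k : ZMod 2) (j : ZMod 4) : C k * B j = B (Mc.twist k j) * C k := by
  rcases Mc.two_cases k with rfl | rfl
  · simp [C, Mc.twist, show ((0 : ZMod 2).val = 0) from rfl]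
  · have key : c * b ^ j.val = (b ^ j.val)⁻¹ * c := by
      have h := conj_pow (i := j.val) (a := c) (b := b)
      have hc : c * b * c⁻¹ = b⁻¹ := by rw [hcb]; group
      rw [hc] at h
      calc c * b ^ j.val = (b⁻¹) ^ j.val * c := by
            rw [h]; group
        _ = (b ^ j.val)⁻¹ * c := by rw [inv_pow]
    simp only [C, Mc.twist, if_pos rfl, if_true,
      show ((1 : ZMod 2).val = 1) from rfl, pow_one]
    rw [← B_inv]
    simp only [B]
    exact key

lemma CC (k k' : ZMod 2) : C k * C k' = A (Mc.extra k k') * C (k + k') := by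
  rcases Mc.two_cases k with rfl | rfl <;> rcases Mc.two_cases k' with rfl | rfl <;>
    simp only [C, Mc.extra, show ((0 : ZMod 2).val = 0) from rfl,
      show ((1 : ZMod 2).val = 1) from rfl, show ((0 : ZMod 2) + 0 = 0) from rfl,
      show ((0 : ZMod 2) + 1 = 1) from rfl, show ((1 : ZMod 2) + 0 = 1) from rfl,
      show ((1 : ZMod 2) + 1 = 0) from rfl, pow_zero, pow_one, one_mul, mul_one]
  · simp [A]
  · simp [A]
  · simp [A]
  · rw [← pow_two, hc2]
    simp [A, show ((2 : ZMod 4).val = 2) from rfl]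

lemma CA' (k : ZMod 2) (i : ZMod 4) (w : PG) :
    C k * (A i * w) = A (Mc.twist k i) * (C k * w) := by
  rw [← mul_assoc, CA, mul_assoc]

lemma CB' (k : ZMod 2) (j : ZMod 4) (w : PG) :
    C k * (B j * w) = B (Mc.twist k j) * (C k * w) := by
  rw [← mul_assoc, CB, mul_assoc]

lemma BA' (j i : ZMod 4) (w : PG) : B j * (A i * w) = A i * (B j * w) := by
  rw [← mul_assoc, BA, mul_assoc]

lemma AA' (i i' : ZMod 4) (w : PG) : A i * (A i' * w) = A (i + i') * w := by
  rw [← mul_assoc, AA]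

lemma BB' (j j' : ZMod 4) (w : PG) : B j * (B j' * w) = B (j + j') * w := by
  rw [← mul_assoc, BB]

def σ (m : Mc) : PG := A m.1 * B m.2.1 * C m.2.2

lemma σ_mul (m m' : Mc) : σ (m * m') = σ m * σ m' := by
  obtain ⟨i, j, k⟩ := m
  obtain ⟨i', j', k'⟩ := m'
  show A (i + Mc.twist k i' + Mc.extra k k') * B (j + Mc.twist k j') * C (k + k') =
    A i * B j * C k * (A i' * B j' * C k')
  simp only [mul_assoc]
  simp only [CA', CB', CC, BA', AA', BB', AA, BB]
  rw [add_assoc]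

/-- The homomorphism from the model `Mc` to the presented group. -/
def σh : Mc →* PG := MonoidHom.mk' σ σ_mul

lemma σh_surj : Function.Surjective σh := by
  intro x
  have hx : x ∈ σh.range := by
    refine PresentedGroup.generated_by G35rels σh.range ?_ x
    intro j
    fin_cases j
    · refine ⟨((1, 0, 0) : Mc), ?_⟩
      show A 1 * B 0 * C 0 = _
      simp only [A, B, C, show ((1 : ZMod 4).val = 1) from rfl,
        show ((0 : ZMod 4).val = 0) from rfl, show ((0 : ZMod 2).val = 0) from rfl,
        pow_one, pow_zero, mul_one]
      rfl
    · refine ⟨((0, 1, 0) : Mc), ?_⟩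
      show A 0 * B 1 * C 0 = _
      simp only [A, B, C, show ((1 : ZMod 4).val = 1) from rfl,
        show ((0 : ZMod 4).val = 0) from rfl, show ((0 : ZMod 2).val = 0) from rfl,
        pow_one, pow_zero, mul_one, one_mul]
      rfl
    · refine ⟨((0, 0, 1) : Mc), ?_⟩
      show A 0 * B 0 * C 1 = _
      simp only [A, B, C, show ((0 : ZMod 4).val = 0) from rfl,
        show ((1 : ZMod 2).val = 1) from rfl, pow_one, pow_zero, mul_one, one_mul]
      rfl
  obtain ⟨m, hm⟩ := hx
  exact ⟨m, hm⟩

def ga : Mc := ((1 : ZMod 4), (0 : ZMod 4), (0 : ZMod 2))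
def gb : Mc := ((0 : ZMod 4), (1 : ZMod 4), (0 : ZMod 2))
def gc : Mc := ((0 : ZMod 4), (0 : ZMod 4), (1 : ZMod 2))

def fgen : Fin 3 → Mc := ![ga, gb, gc]

lemma hrels : ∀ r ∈ G35rels, FreeGroup.lift fgen r = 1 := by
  intro r hr
  simp only [G35rels, Set.mem_insert_iff, Set.mem_singleton_iff] at hr
  rcases hr with rfl | rfl | rfl | rfl | rfl | rfl <;>
  · simp only [map_mul, map_pow, map_inv, FreeGroup.lift_apply_of]
    decide

/-- The homomorphism from the presented group to the model. -/
def φ : PG →* Mc := PresentedGroup.toGroup hrels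

lemma φσ : ∀ m : Mc, φ (σh m) = m := by
  have key : ∀ m : Mc, ga ^ m.1.val * gb ^ m.2.1.val * gc ^ m.2.2.val = m := by decide
  intro m
  show φ (A m.1 * B m.2.1 * C m.2.2) = m
  simp only [A, B, C, map_mul, map_pow]
  have h0 : φ a = ga := PresentedGroup.toGroup.of hrels
  have h1 : φ b = gb := PresentedGroup.toGroup.of hrels
  have h2 : φ c = gc := PresentedGroup.toGroup.of hrels
  rw [h0, h1, h2]
  exact key m

/-- The model is isomorphic to the presented group. -/
noncomputable def iso : Mc ≃* PG :=
  MulEquiv.ofBijective σh ⟨Function.LeftInverse.injective φσ, σh_surj⟩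

lemma card_PG : Nat.card PG = 32 := by
  rw [Nat.card_congr iso.toEquiv.symm, Nat.card_eq_fintype_card]
  rfl

end G35aux

lemma invAction_ofAdd_one (N : Type*) [CommGroup N] :
    invAction N (Multiplicative.ofAdd 1) = MulEquiv.inv N := by
  rw [invAction, AddMonoidHom.coe_toMultiplicativeLeft]
  show Additive.toMul (ZMod.lift 2 _ (Multiplicative.toAdd (Multiplicative.ofAdd (1 : ZMod 2)))) = _
  rw [toAdd_ofAdd, show (1 : ZMod 2) = ((1 : ℤ) : ZMod 2) from by decide, ZMod.lift_coe]
  simp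

/-- The group `G35` defined by
`⟨a, b, c | a⁴ = b⁴ = 1, [a,b] = 1, c² = a², cac⁻¹ = a⁻¹, cbc⁻¹ = b⁻¹⟩`
has order 32 and is not isomorphic to the split extension
`G34 = (C₄ × C₄) ⋊ C₂` with `C₂` acting by inversion. -/
theorem G35_card_and_not_iso_G34 :
    Nat.card (PresentedGroup G35rels) = 32 ∧
      IsEmpty (PresentedGroup G35rels ≃* G34) := by
  refine ⟨G35aux.card_PG, ⟨fun e => ?_⟩⟩
  have P : ∀ x y : Mc, x * x = 1 → x * y = y * x := by decide
  let F : Mc ≃* G34 := G35aux.iso.trans e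
  set x0 : G34 := ⟨1, Multiplicative.ofAdd 1⟩ with hx0def
  set y0 : G34 := ⟨(Multiplicative.ofAdd (1 : ZMod 4), 1), 1⟩ with hy0def
  have hx0 : x0 * x0 = 1 := by
    refine SemidirectProduct.ext ?_ ?_
    · show (1 : Cyc 4 × Cyc 4) * (invAction _ (Multiplicative.ofAdd 1)) 1 = 1
      simp
    · show Multiplicative.ofAdd (1 : ZMod 2) * Multiplicative.ofAdd 1 = 1
      decide
  have hxy0 : x0 * y0 ≠ y0 * x0 := by
    intro h
    have hl := congrArg SemidirectProduct.left h
    have h1 : (x0 * y0).left = (Multiplicative.ofAdd (1 : ZMod 4), (1 : Cyc 4))⁻¹ := by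
      show (1 : Cyc 4 × Cyc 4) *
        (invAction _ (Multiplicative.ofAdd 1)) (Multiplicative.ofAdd (1 : ZMod 4), 1) = _
      rw [invAction_ofAdd_one, one_mul]
      rfl
    have h2 : (y0 * x0).left = (Multiplicative.ofAdd (1 : ZMod 4), (1 : Cyc 4)) := by
      show (Multiplicative.ofAdd (1 : ZMod 4), (1 : Cyc 4)) * (invAction _ y0.right) 1 = _
      simp
    rw [h1, h2] at hl
    exact absurd hl (by decide)
  have hu : F.symm x0 * F.symm x0 = 1 := by
    rw [← map_mul, hx0, map_one]
  have hcomm := P (F.symm x0) (F.symm y0) hu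
  have h2 := congrArg F hcomm
  rw [map_mul, map_mul, MulEquiv.apply_symm_apply, MulEquiv.apply_symm_apply] at h2
  exact hxy0 h2
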